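/- arXiv:2410.04437 — 2 statements merged into one kernel-verified Lean document; each statement's English description precedes it below -/
import Mathlib

section
/- Let X be a BK-space of real sequences over ℕ that is solid, contains every finitely supported sequence, and has the Fatou property. Then X coincides with its second Köthe dual X^{αα}, and ‖x‖_{X^{αα}} = ‖x‖_X for every x ∈ X. -/
open Filter

/-- Membership in the Köthe dual `X^α` of a BK-space `X` (modeled by `j : E →ₗ (ℕ → ℝ)`):
`h ∈ X^α` iff `∑ |h n · x n| < ∞` for all `x ∈ X`. -/
def memKotheDual {E : Type*} [NormedAddCommGroup E] [NormedSpace ℝ E]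
    (j : E →ₗ[ℝ] (ℕ → ℝ)) (h : ℕ → ℝ) : Prop :=
  ∀ x : E, Summable fun n => |h n * j x n|

/-- The Köthe dual norm `‖h‖_{X^α} = sup { ∑ |h n · x n| : ‖x‖_X ≤ 1 }` in `ℝ≥0∞`. -/
noncomputable def kotheDualNorm {E : Type*} [NormedAddCommGroup E] [NormedSpace ℝ E]
    (j : E →ₗ[ℝ] (ℕ → ℝ)) (h : ℕ → ℝ) : ENNReal :=
  ⨆ (x : E) (_ : ‖x‖ ≤ 1), ∑' n, (‖h n * j x n‖₊ : ENNReal)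

/-- The second Köthe dual norm `‖g‖_{X^{αα}} = sup { ∑ |g n · h n| : h ∈ X^α, ‖h‖_{X^α} ≤ 1 }`. -/
noncomputable def kotheBidualNorm {E : Type*} [NormedAddCommGroup E] [NormedSpace ℝ E]
    (j : E →ₗ[ℝ] (ℕ → ℝ)) (g : ℕ → ℝ) : ENNReal :=
  ⨆ (h : ℕ → ℝ) (_ : memKotheDual j h ∧ kotheDualNorm j h ≤ 1),
    ∑' n, (‖g n * h n‖₊ : ENNReal)

lemma sign_mul_self_abs (t : ℝ) : Real.sign t * t = |t| := by
  rcases lt_trichotomy t 0 with h|h|h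
  · rw [Real.sign_of_neg h, abs_of_neg h]; ring
  · simp [h]
  · rw [Real.sign_of_pos h, abs_of_pos h]; ring

lemma abs_sign_le (t : ℝ) : |Real.sign t| ≤ 1 := by
  rcases Real.sign_apply_eq t with h|h|h <;> rw [h] <;> norm_num

lemma dualNorm_tsum_le {E : Type*} [NormedAddCommGroup E] [NormedSpace ℝ E]
    (j : E →ₗ[ℝ] (ℕ → ℝ)) {h : ℕ → ℝ} (hn : kotheDualNorm j h ≤ 1) (x : E) :
    ∑' n, (‖h n * j x n‖₊ : ENNReal) ≤ ENNReal.ofReal ‖x‖ := by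
  rcases eq_or_ne x 0 with rfl|hx
  · simp
  · have hnx : 0 < ‖x‖ := norm_pos_iff.mpr hx
    set y : E := ‖x‖⁻¹ • x with hy
    have hyn : ‖y‖ ≤ 1 := by
      rw [hy, norm_smul, norm_inv, norm_norm, inv_mul_cancel₀ hnx.ne']
    have h1 : ∑' n, (‖h n * j y n‖₊ : ENNReal) ≤ 1 :=
      le_trans (le_iSup₂_of_le y hyn le_rfl) hn
    have hxy : ∀ n, j x n = ‖x‖ * j y n := by
      intro n
      rw [hy, map_smul]
      simp only [Pi.smul_apply, smul_eq_mul]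
      rw [mul_inv_cancel_left₀ hnx.ne']
    calc ∑' n, (‖h n * j x n‖₊ : ENNReal)
        = ∑' n, (ENNReal.ofReal ‖x‖ * ‖h n * j y n‖₊) := by
          congr 1; funext n
          rw [hxy n, ← enorm_eq_nnnorm, Real.enorm_eq_ofReal_abs, ← enorm_eq_nnnorm, Real.enorm_eq_ofReal_abs,
            ← ENNReal.ofReal_mul hnx.le]
          congr 1
          rw [abs_mul, abs_mul, abs_mul, abs_of_pos hnx]; ring
      _ = ENNReal.ofReal ‖x‖ * ∑' n, (‖h n * j y n‖₊ : ENNReal) := ENNReal.tsum_mul_left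
      _ ≤ ENNReal.ofReal ‖x‖ * 1 := mul_le_mul_right h1 _
      _ = ENNReal.ofReal ‖x‖ := mul_one _

lemma dualNorm_partial {E : Type*} [NormedAddCommGroup E] [NormedSpace ℝ E]
    (j : E →ₗ[ℝ] (ℕ → ℝ)) {h : ℕ → ℝ} (hn : kotheDualNorm j h ≤ 1) (x : E) (t : Finset ℕ) :
    ∑ n ∈ t, |h n * j x n| ≤ ‖x‖ := by
  have h1 : ENNReal.ofReal (∑ n ∈ t, |h n * j x n|) ≤ ENNReal.ofReal ‖x‖ := by
    rw [ENNReal.ofReal_sum_of_nonneg (fun n _ => abs_nonneg _)]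
    calc ∑ n ∈ t, ENNReal.ofReal |h n * j x n|
        = ∑ n ∈ t, (‖h n * j x n‖₊ : ENNReal) := by
          refine Finset.sum_congr rfl fun n _ => ?_
          rw [← enorm_eq_nnnorm, Real.enorm_eq_ofReal_abs]
      _ ≤ ∑' n, (‖h n * j x n‖₊ : ENNReal) := ENNReal.sum_le_tsum t
      _ ≤ ENNReal.ofReal ‖x‖ := dualNorm_tsum_le j hn x
  exact (ENNReal.ofReal_le_ofReal_iff (norm_nonneg x)).mp h1

lemma sum_single_eq {E : Type*} [NormedAddCommGroup E] [NormedSpace ℝ E]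
    (j : E →ₗ[ℝ] (ℕ → ℝ)) (e : ℕ → E) (he : ∀ n, j (e n) = Pi.single n 1)
    (u : ℕ → ℝ) (s : Finset ℕ) (hu : ∀ n ∉ s, u n = 0) :
    j (∑ n ∈ s, u n • e n) = u := by
  funext m
  rw [map_sum]
  have : (∑ n ∈ s, j (u n • e n)) m = ∑ n ∈ s, u n * (Pi.single n 1 : ℕ → ℝ) m := by
    rw [Finset.sum_apply]
    refine Finset.sum_congr rfl fun n _ => ?_
    rw [map_smul, he n]; rfl
  rw [this]
  by_cases hm : m ∈ s
  · rw [Finset.sum_eq_single m]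
    · simp
    · intro n _ hnm; simp [Pi.single_apply, (Ne.symm hnm : ¬ m = n)]
    · intro hms; exact absurd hm hms
  · rw [hu m hm, Finset.sum_eq_zero]
    intro n hn
    have : m ≠ n := fun hc => hm (hc ▸ hn)
    simp [Pi.single_apply, this]

lemma normingFunctional {E : Type*} [NormedAddCommGroup E] [NormedSpace ℝ E]
    (j : E →ₗ[ℝ] (ℕ → ℝ))
    (hinj : Function.Injective j)
    (hsolid : ∀ (x : E) (y : ℕ → ℝ), (∀ n, |y n| ≤ |j x n|) →
      ∃ z : E, j z = y ∧ ‖z‖ ≤ ‖x‖)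
    (e : ℕ → E) (he : ∀ n, j (e n) = Pi.single n 1)
    (x : E) (s : Finset ℕ) (hs : ∀ n ∉ s, j x n = 0) :
    ∃ h : ℕ → ℝ, (∀ n, 0 ≤ h n) ∧ memKotheDual j h ∧ kotheDualNorm j h ≤ 1 ∧
      ‖x‖ ≤ ∑ n ∈ s, |j x n| * h n := by
  rcases eq_or_ne x 0 with rfl|hx
  · refine ⟨0, fun n => le_rfl, fun x' => by simpa using summable_zero, ?_, by simp⟩
    refine iSup₂_le fun x' _ => ?_
    simp
  obtain ⟨φ, hφ1, hφx⟩ := exists_dual_vector ℝ x (norm_ne_zero_iff.mpr hx)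
  set h : ℕ → ℝ := fun n => if n ∈ s then |φ (e n)| else 0 with hh
  have hpos : ∀ n, 0 ≤ h n := by
    intro n; rw [hh]; dsimp only; split <;> simp [abs_nonneg]
  have key : ∀ x' : E, ∑ n ∈ s, h n * |j x' n| ≤ ‖x'‖ := by
    intro x'
    set u : ℕ → ℝ := fun n => if n ∈ s then Real.sign (φ (e n)) * |j x' n| else 0 with hu
    have hu0 : ∀ n ∉ s, u n = 0 := fun n hn => by rw [hu]; simp [hn]
    have hule : ∀ n, |u n| ≤ |j x' n| := by
      intro n
      rw [hu]; dsimp only; split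
      · rw [abs_mul, abs_abs]
        exact mul_le_of_le_one_left (abs_nonneg _) (abs_sign_le _)
      · simp [abs_nonneg]
    obtain ⟨z, hz, hzn⟩ := hsolid x' u hule
    have hzz : z = ∑ n ∈ s, u n • e n :=
      hinj (by rw [hz, sum_single_eq j e he u s hu0])
    have hφz : φ z = ∑ n ∈ s, h n * |j x' n| := by
      rw [hzz, map_sum]
      refine Finset.sum_congr rfl fun n hn => ?_
      rw [map_smul, smul_eq_mul, hu, hh]
      simp only [if_pos hn]
      rw [← sign_mul_self_abs (φ (e n))]; ring
    calc ∑ n ∈ s, h n * |j x' n| = φ z := hφz.symm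
      _ ≤ ‖φ‖ * ‖z‖ := le_trans (le_abs_self _) (by
          rw [← Real.norm_eq_abs]; exact φ.le_opNorm z)
      _ = ‖z‖ := by rw [hφ1, one_mul]
      _ ≤ ‖x'‖ := hzn
  have hmem : memKotheDual j h := by
    intro x'
    apply summable_of_ne_finset_zero (s := s)
    intro n hn
    rw [hh]; simp [hn]
  have hdn : kotheDualNorm j h ≤ 1 := by
    refine iSup₂_le fun x' hx' => ?_
    have h2 : ∑' n, (‖h n * j x' n‖₊ : ENNReal) = ∑ n ∈ s, (‖h n * j x' n‖₊ : ENNReal) := by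
      apply tsum_eq_sum
      intro n hn
      rw [hh]; simp [hn]
    rw [h2]
    have h3 : ∑ n ∈ s, (‖h n * j x' n‖₊ : ENNReal) = ENNReal.ofReal (∑ n ∈ s, |h n * j x' n|) := by
      rw [ENNReal.ofReal_sum_of_nonneg (fun n _ => abs_nonneg _)]
      exact Finset.sum_congr rfl fun n _ => Real.enorm_eq_ofReal_abs _
    rw [h3]
    have hb : ∑ n ∈ s, |h n * j x' n| ≤ 1 := by
      refine le_trans (le_of_eq ?_) (le_trans (key x') hx')
      refine Finset.sum_congr rfl fun n _ => ?_
      rw [abs_mul, abs_of_nonneg (hpos n)]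
    exact le_trans (ENNReal.ofReal_le_ofReal hb) (by simp)
  refine ⟨h, hpos, hmem, hdn, ?_⟩
  have hxe : x = ∑ n ∈ s, (j x n) • e n := hinj (by rw [sum_single_eq j e he _ s hs])
  calc ‖x‖ = φ x := hφx.symm
    _ = ∑ n ∈ s, (j x n) * φ (e n) := by
        conv_lhs => rw [hxe]
        rw [map_sum]
        exact Finset.sum_congr rfl fun n _ => by rw [map_smul, smul_eq_mul]
    _ ≤ ∑ n ∈ s, |j x n| * h n := by
        refine Finset.sum_le_sum fun n hn => ?_
        rw [hh]; simp only [if_pos hn]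
        calc j x n * φ (e n) ≤ |j x n * φ (e n)| := le_abs_self _
          _ = |j x n| * |φ (e n)| := abs_mul _ _

lemma trunc_fatou {E : Type*} [NormedAddCommGroup E] [NormedSpace ℝ E]
    (j : E →ₗ[ℝ] (ℕ → ℝ))
    (hfatou : ∀ (xk : ℕ → E) (f : ℕ → ℝ),
      (∀ n, 0 ≤ j (xk 0) n) →
      (∀ n, Monotone fun k => j (xk k) n) →
      (∀ n, Tendsto (fun k => j (xk k) n) atTop (nhds (f n))) →
      BddAbove (Set.range fun k => ‖xk k‖) →
      ∃ z : E, j z = f ∧ Monotone (fun k => ‖xk k‖) ∧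
        Tendsto (fun k => ‖xk k‖) atTop (nhds ‖z‖))
    (g : ℕ → ℝ) (z : ℕ → E)
    (hz : ∀ k, j (z k) = fun n => if n ≤ k then |g n| else 0)
    (hbdd : BddAbove (Set.range fun k => ‖z k‖)) :
    ∃ w : E, j w = (fun n => |g n|) ∧ Tendsto (fun k => ‖z k‖) atTop (nhds ‖w‖) := by
  obtain ⟨w, hw, _, htw⟩ := hfatou z (fun n => |g n|)
    (fun n => by rw [hz]; dsimp only; split <;> simp [abs_nonneg])
    (fun n => by
      intro k k' hk
      simp only [hz]
      by_cases hnk : n ≤ k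
      · rw [if_pos hnk, if_pos (hnk.trans hk)]
      · rw [if_neg hnk]; split <;> simp [abs_nonneg])
    (fun n => by
      apply tendsto_atTop_of_eventually_const (i₀ := n)
      intro k hk
      simp only [hz]; rw [if_pos hk])
    hbdd
  exact ⟨w, hw, htw⟩

/-- A solid BK-space `X` of real sequences over `ℕ` containing all finitely
supported sequences and having the Fatou property coincides isometrically with its second
Köthe dual `X^{αα}`. -/
theorem solid_fatou_bk_eq_bidual
    {E : Type*} [NormedAddCommGroup E] [NormedSpace ℝ E] [CompleteSpace E]
    (j : E →ₗ[ℝ] (ℕ → ℝ))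
    (hinj : Function.Injective j)
    (hcoord : ∀ n : ℕ, ∃ C : ℝ, ∀ x : E, |j x n| ≤ C * ‖x‖)
    (hsolid : ∀ (x : E) (y : ℕ → ℝ), (∀ n, |y n| ≤ |j x n|) →
      ∃ z : E, j z = y ∧ ‖z‖ ≤ ‖x‖)
    (hfin : ∀ y : ℕ → ℝ, (Function.support y).Finite → ∃ z : E, j z = y)
    (hfatou : ∀ (xk : ℕ → E) (f : ℕ → ℝ),
      (∀ n, 0 ≤ j (xk 0) n) →
      (∀ n, Monotone fun k => j (xk k) n) →
      (∀ n, Tendsto (fun k => j (xk k) n) atTop (nhds (f n))) →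
      BddAbove (Set.range fun k => ‖xk k‖) →
      ∃ z : E, j z = f ∧ Monotone (fun k => ‖xk k‖) ∧
        Tendsto (fun k => ‖xk k‖) atTop (nhds ‖z‖)) :
    (∀ g : ℕ → ℝ,
      (∀ h : ℕ → ℝ, memKotheDual j h → Summable fun n => |g n * h n|) ↔ ∃ x : E, j x = g) ∧
    (∀ x : E, kotheBidualNorm j (j x) = ENNReal.ofReal ‖x‖) := by
  -- basis vectors
  have hesupp : ∀ n : ℕ, (Function.support (Pi.single n 1 : ℕ → ℝ)).Finite := by
    intro n
    apply Set.Finite.subset (Set.finite_singleton n)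
    intro m hm
    simp only [Set.mem_singleton_iff]
    by_contra hmn
    exact hm (Pi.single_eq_of_ne hmn 1)
  choose e he using fun n => hfin _ (hesupp n)
  -- Part 2: norm equality
  have norm_eq : ∀ x : E, kotheBidualNorm j (j x) = ENNReal.ofReal ‖x‖ := by
    intro x
    apply le_antisymm
    · refine iSup₂_le fun h hh => ?_
      have hc : ∑' n, (‖j x n * h n‖₊ : ENNReal) = ∑' n, (‖h n * j x n‖₊ : ENNReal) := by
        congr 1; funext n; rw [mul_comm]
      rw [hc]
      exact dualNorm_tsum_le j hh.2 x
    · have htr : ∀ k : ℕ, ∃ z : E,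
          j z = (fun n => if n ≤ k then |j x n| else 0) ∧ ‖z‖ ≤ ‖x‖ := by
        intro k
        apply hsolid x
        intro n; split
        · rw [abs_abs]
        · simp [abs_nonneg]
      choose z hz hzn using htr
      obtain ⟨w, hw, htw⟩ := trunc_fatou j hfatou (j x) z hz
        ⟨‖x‖, by rintro - ⟨k, rfl⟩; exact hzn k⟩
      have hwx : ‖w‖ = ‖x‖ := by
        apply le_antisymm
        · exact le_of_tendsto htw (Filter.Eventually.of_forall hzn)
        · obtain ⟨x', hx', hx'n⟩ := hsolid w (j x) (fun n => by
            rw [hw]; exact le_of_eq (abs_abs _).symm)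
          rwa [hinj hx'] at hx'n
      have hk : ∀ k : ℕ, ENNReal.ofReal ‖z k‖ ≤ kotheBidualNorm j (j x) := by
        intro k
        obtain ⟨h, hpos, hmem, hdn, hle⟩ := normingFunctional j hinj hsolid e he (z k)
          (Finset.range (k+1)) (by
            intro n hn
            simp only [hz]
            exact if_neg fun hc => hn (Finset.mem_range.mpr (Nat.lt_succ_of_le hc)))
        calc ENNReal.ofReal ‖z k‖
            ≤ ENNReal.ofReal (∑ n ∈ Finset.range (k+1), |j (z k) n| * h n) :=
              ENNReal.ofReal_le_ofReal hle
          _ = ∑ n ∈ Finset.range (k+1), (‖j (z k) n * h n‖₊ : ENNReal) := by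
              rw [ENNReal.ofReal_sum_of_nonneg (fun n _ => mul_nonneg (abs_nonneg _) (hpos n))]
              refine Finset.sum_congr rfl fun n _ => ?_
              rw [← enorm_eq_nnnorm, Real.enorm_eq_ofReal_abs, abs_mul, abs_of_nonneg (hpos n)]
          _ ≤ ∑ n ∈ Finset.range (k+1), (‖j x n * h n‖₊ : ENNReal) := by
              refine Finset.sum_le_sum fun n _ => ?_
              rw [← enorm_eq_nnnorm, Real.enorm_eq_ofReal_abs, ← enorm_eq_nnnorm, Real.enorm_eq_ofReal_abs]
              apply ENNReal.ofReal_le_ofReal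
              rw [abs_mul, abs_mul]
              apply mul_le_mul_of_nonneg_right _ (abs_nonneg _)
              simp only [hz]
              split
              · rw [abs_abs]
              · simp [abs_nonneg]
          _ ≤ ∑' n, (‖j x n * h n‖₊ : ENNReal) := ENNReal.sum_le_tsum _
          _ ≤ kotheBidualNorm j (j x) := le_iSup₂_of_le h ⟨hmem, hdn⟩ le_rfl
      have hten : Tendsto (fun k => ENNReal.ofReal ‖z k‖) atTop
          (nhds (ENNReal.ofReal ‖x‖)) := by
        rw [← hwx]
        exact (ENNReal.continuous_ofReal.tendsto _).comp htw
      exact le_of_tendsto hten (Filter.Eventually.of_forall hk)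
  refine ⟨fun g => ⟨fun hg => ?_, ?_⟩, norm_eq⟩
  · -- hard direction: g is represented
    have htr : ∀ k : ℕ, ∃ z : E, j z = (fun n => if n ≤ k then |g n| else 0) := by
      intro k
      apply hfin
      apply Set.Finite.subset (Set.finite_le_nat k)
      intro m hm
      simp only [Set.mem_setOf_eq]
      by_contra hmk
      apply hm
      dsimp only
      rw [if_neg hmk]
    choose z hz using htr
    have hbound : ∃ M : ℝ, ∀ k, ‖z k‖ ≤ M := by
      by_contra hub
      push_neg at hub
      have hchoice : ∀ K : ℕ, ∃ k, (2:ℝ)^K * (K+1) < ‖z k‖ := fun K => hub _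
      choose kk hkk using hchoice
      have hnf : ∀ K : ℕ, ∃ h : ℕ → ℝ, (∀ n, 0 ≤ h n) ∧ memKotheDual j h ∧
          kotheDualNorm j h ≤ 1 ∧
          ‖z (kk K)‖ ≤ ∑ n ∈ Finset.range (kk K + 1), |j (z (kk K)) n| * h n := by
        intro K
        apply normingFunctional j hinj hsolid e he
        intro n hn
        simp only [hz]
        exact if_neg fun hc => hn (Finset.mem_range.mpr (Nat.lt_succ_of_le hc))
      choose hK hKpos hKmem hKdn hKle using hnf
      have hKbd : ∀ K n, hK K n ≤ ‖e n‖ := by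
        intro K n
        have h1 := dualNorm_partial j (hKdn K) (e n) {n}
        simp only [Finset.sum_singleton, he n, Pi.single_eq_same, mul_one] at h1
        calc hK K n = |hK K n| := (abs_of_nonneg (hKpos K n)).symm
          _ ≤ ‖e n‖ := h1
      have hgeo : Summable fun K : ℕ => ((1:ℝ)/2)^K := summable_geometric_two
      have hsumK : ∀ n, Summable fun K => ((1:ℝ)/2)^K * hK K n := by
        intro n
        apply Summable.of_nonneg_of_le (fun K => mul_nonneg (by positivity) (hKpos K n))
          (fun K => mul_le_mul_of_nonneg_left (hKbd K n) (by positivity))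
          (hgeo.mul_right ‖e n‖)
      set H : ℕ → ℝ := fun n => ∑' K, ((1:ℝ)/2)^K * hK K n with hH
      have hHpos : ∀ n, 0 ≤ H n := fun n =>
        tsum_nonneg fun K => mul_nonneg (by positivity) (hKpos K n)
      have hHge : ∀ K n, ((1:ℝ)/2)^K * hK K n ≤ H n := fun K n =>
        Summable.le_tsum (hsumK n) K fun m _ => mul_nonneg (by positivity) (hKpos m n)
      have hHmem : memKotheDual j H := by
        intro x
        apply summable_of_sum_range_le (c := (∑' K : ℕ, ((1:ℝ)/2)^K) * ‖x‖)
          (fun n => abs_nonneg _)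
        intro N
        have e1 : ∀ i, |H i * j x i| = ∑' K, ((1:ℝ)/2)^K * hK K i * |j x i| := by
          intro i
          rw [abs_mul, abs_of_nonneg (hHpos i), hH]
          dsimp only
          rw [← tsum_mul_right]
        have hinner : ∀ K, ∑ i ∈ Finset.range N, ((1:ℝ)/2)^K * hK K i * |j x i|
            ≤ ((1:ℝ)/2)^K * ‖x‖ := by
          intro K
          have h2 : ∑ i ∈ Finset.range N, ((1:ℝ)/2)^K * hK K i * |j x i|
              = ((1:ℝ)/2)^K * ∑ i ∈ Finset.range N, hK K i * |j x i| := by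
            rw [Finset.mul_sum]
            exact Finset.sum_congr rfl fun i _ => by ring
          rw [h2]
          apply mul_le_mul_of_nonneg_left _ (by positivity)
          calc ∑ i ∈ Finset.range N, hK K i * |j x i|
              = ∑ i ∈ Finset.range N, |hK K i * j x i| := by
                refine Finset.sum_congr rfl fun i _ => ?_
                rw [abs_mul, abs_of_nonneg (hKpos K i)]
            _ ≤ ‖x‖ := dualNorm_partial j (hKdn K) x _
        calc ∑ i ∈ Finset.range N, |H i * j x i|
            = ∑ i ∈ Finset.range N, ∑' K, ((1:ℝ)/2)^K * hK K i * |j x i| :=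
              Finset.sum_congr rfl fun i _ => e1 i
          _ = ∑' K, ∑ i ∈ Finset.range N, ((1:ℝ)/2)^K * hK K i * |j x i| :=
              (Summable.tsum_finsetSum fun i _ => (hsumK i).mul_right _).symm
          _ ≤ ∑' K, ((1:ℝ)/2)^K * ‖x‖ := by
              apply Summable.tsum_le_tsum hinner _ (hgeo.mul_right ‖x‖)
              apply Summable.of_nonneg_of_le
                (fun K => Finset.sum_nonneg fun i _ =>
                  mul_nonneg (mul_nonneg (by positivity) (hKpos K i)) (abs_nonneg _))
                hinner (hgeo.mul_right ‖x‖)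
          _ = (∑' K : ℕ, ((1:ℝ)/2)^K) * ‖x‖ := tsum_mul_right
      have hS := hg H hHmem
      set S := ∑' n, |g n * H n| with hSdef
      have hKS : ∀ K : ℕ, (K+1 : ℝ) ≤ S := by
        intro K
        have h1 : ∑ n ∈ Finset.range (kk K + 1), |g n * H n| ≤ S :=
          Summable.sum_le_tsum _ (fun n _ => abs_nonneg _) hS
        have h2 : ((1:ℝ)/2)^K * ‖z (kk K)‖ ≤ ∑ n ∈ Finset.range (kk K + 1), |g n * H n| := by
          calc ((1:ℝ)/2)^K * ‖z (kk K)‖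
              ≤ ((1:ℝ)/2)^K * ∑ n ∈ Finset.range (kk K + 1), |j (z (kk K)) n| * hK K n :=
                mul_le_mul_of_nonneg_left (hKle K) (by positivity)
            _ = ∑ n ∈ Finset.range (kk K + 1), |j (z (kk K)) n| * (((1:ℝ)/2)^K * hK K n) := by
                rw [Finset.mul_sum]
                exact Finset.sum_congr rfl fun n _ => by ring
            _ ≤ ∑ n ∈ Finset.range (kk K + 1), |g n * H n| := by
                refine Finset.sum_le_sum fun n hn => ?_
                have hgn : |j (z (kk K)) n| = |g n| := by
                  simp only [hz]
                  rw [if_pos (Nat.lt_succ_iff.mp (Finset.mem_range.mp hn)), abs_abs]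
                rw [hgn, abs_mul, abs_of_nonneg (hHpos n)]
                exact mul_le_mul_of_nonneg_left (hHge K n) (abs_nonneg _)
        have h3 : (K+1:ℝ) = ((1:ℝ)/2)^K * ((2:ℝ)^K * (K+1)) := by
          rw [← mul_assoc, ← mul_pow]; norm_num
        calc (K+1:ℝ) = ((1:ℝ)/2)^K * ((2:ℝ)^K * (K+1)) := h3
          _ ≤ ((1:ℝ)/2)^K * ‖z (kk K)‖ := mul_le_mul_of_nonneg_left (hkk K).le (by positivity)
          _ ≤ S := h2.trans h1
      obtain ⟨K, hKgt⟩ := exists_nat_gt S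
      have := hKS K
      linarith
    obtain ⟨M, hM⟩ := hbound
    obtain ⟨w, hw, -⟩ := trunc_fatou j hfatou g z hz ⟨M, by rintro - ⟨k, rfl⟩; exact hM k⟩
    obtain ⟨x, hx, -⟩ := hsolid w g (fun n => by rw [hw]; exact le_of_eq (abs_abs _).symm)
    exact ⟨x, hx⟩
  · rintro ⟨x, rfl⟩ h hmem
    exact (hmem x).congr fun n => by rw [mul_comm]
end

section
/- Let B be a Segal algebra on ℝ^d that is strongly character invariant, i.e., for every s ∈ ℝ^d and f ∈ B the pointwise product χ_s·f belongs to B with ‖χ_s·f‖_B = ‖f‖_B, where χ_s(x) := e^{2πi⟨s, x⟩}. Then for every f ∈ B the map s ↦ χ_s·f is continuous from ℝ^d to B. -/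
open MeasureTheory Real

/-- The character `χ_s(t) = e^{2πi⟨s,t⟩}` of `ℝ^d`. -/
noncomputable def character {d : ℕ} (s t : Fin d → ℝ) : ℂ :=
  Complex.exp (2 * Real.pi * Complex.I * (∑ i, s i * t i))

open Filter Topology


lemma character_norm {d : ℕ} (s t : Fin d → ℝ) : ‖character s t‖ = 1 := by
  unfold character
  rw [Complex.norm_exp]
  simp [Complex.mul_re, Complex.mul_im]

lemma character_add {d : ℕ} (s s' t : Fin d → ℝ) :
    character s t * character s' t = character (s + s') t := by
  unfold character
  rw [← Complex.exp_add]
  congr 1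
  have h : (∑ i, (s + s') i * t i) = (∑ i, s i * t i) + (∑ i, s' i * t i) := by
    simp [add_mul, Finset.sum_add_distrib]
  rw [h]; push_cast; ring

lemma character_zero {d : ℕ} (t : Fin d → ℝ) : character 0 t = 1 := by
  simp [character]

lemma character_cont_t {d : ℕ} (s : Fin d → ℝ) : Continuous fun t => character s t := by
  unfold character
  fun_prop

lemma character_cont_s {d : ℕ} (t : Fin d → ℝ) : Continuous fun s : Fin d → ℝ => character s t := by
  unfold character
  fun_prop

lemma character_shift {d : ℕ} (s a t : Fin d → ℝ) :
    character s (t - a) = character (-s) a * character s t := by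
  unfold character
  rw [← Complex.exp_add]
  congr 1
  have h : (∑ i, s i * (t - a) i) = (∑ i, (-s) i * a i) + (∑ i, s i * t i) := by
    simp only [Pi.sub_apply, Pi.neg_apply, mul_sub, neg_mul, Finset.sum_sub_distrib,
      Finset.sum_neg_distrib]
    ring
  rw [h]; push_cast; ring

section conv
variable {d : ℕ} {E : Type*} [NormedAddCommGroup E] [NormedSpace ℂ E] [CompleteSpace E]

lemma conv_integrand_integrable (T : (Fin d → ℝ) → E →ₗ[ℂ] E)
    (hTiso : ∀ (a : Fin d → ℝ) (x : E), ‖T a x‖ = ‖x‖)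
    (hTcont : ∀ x : E, Continuous fun a => T a x)
    {g : (Fin d → ℝ) → ℂ} (hg : Integrable g volume) (x : E) :
    Integrable (fun a => g a • T a x) volume := by
  have hm : AEStronglyMeasurable (fun a => g a • T a x) volume :=
    hg.aestronglyMeasurable.smul (hTcont x).aestronglyMeasurable
  refine (hg.norm.mul_const ‖x‖).mono' hm (Eventually.of_forall fun a => ?_)
  rw [norm_smul, hTiso]

lemma conv_norm_le (T : (Fin d → ℝ) → E →ₗ[ℂ] E)
    (hTiso : ∀ (a : Fin d → ℝ) (x : E), ‖T a x‖ = ‖x‖)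
    {g : (Fin d → ℝ) → ℂ} (hg : Integrable g volume) (x : E) :
    ‖∫ a, g a • T a x‖ ≤ (∫ a, ‖g a‖) * ‖x‖ := by
  refine (norm_integral_le_of_norm_le (hg.norm.mul_const ‖x‖)
    (Eventually.of_forall fun a => by rw [norm_smul, hTiso])).trans ?_
  rw [integral_mul_const]

set_option maxHeartbeats 1000000 in
lemma conv_j (j : E →ₗ[ℂ] ((Fin d → ℝ) → ℂ))
    (hint : ∀ x : E, Integrable (j x) volume)
    {C : ℝ} (hC : ∀ x : E, ∫ t, ‖j x t‖ ≤ C * ‖x‖)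
    (T : (Fin d → ℝ) → E →ₗ[ℂ] E)
    (hT : ∀ (a : Fin d → ℝ) (x : E), j (T a x) =ᵐ[volume] fun t => j x (t - a))
    (hTiso : ∀ (a : Fin d → ℝ) (x : E), ‖T a x‖ = ‖x‖)
    (hTcont : ∀ x : E, Continuous fun a => T a x)
    {g : (Fin d → ℝ) → ℂ} (hg : Integrable g volume) (x : E) :
    j (∫ a, g a • T a x) =ᵐ[volume] fun t => ∫ a, g a * j x (t - a) := by
  have hgT := conv_integrand_integrable T hTiso hTcont hg x
  have hcconv : (fun t => ∫ a, g a * j x (t - a)) =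
      MeasureTheory.convolution g (j x) (ContinuousLinearMap.mul ℂ ℂ) volume := by
    ext t
    simp [MeasureTheory.convolution]
  have hcint : Integrable (fun t => ∫ a, g a * j x (t - a)) volume := by
    rw [hcconv]
    exact hg.integrable_convolution _ (hint x)
  have hprod : Integrable (fun p : (Fin d → ℝ) × (Fin d → ℝ) => g p.2 * j x (p.1 - p.2))
      (volume.prod volume) := by
    have := hg.convolution_integrand (ContinuousLinearMap.mul ℂ ℂ) (hint x)
    simpa using this
  refine ae_eq_of_forall_setIntegral_eq_of_sigmaFinite
    (fun s _ _ => (hint _).integrableOn) (fun s _ _ => hcint.integrableOn) ?_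
  intro S hS hμS
  -- the continuous linear functional `y ↦ ∫ t in S, j y t`
  set ℓ : E →L[ℂ] ℂ := LinearMap.mkContinuous
    { toFun := fun y => ∫ t in S, j y t
      map_add' := fun y z => by
        simp only [map_add, Pi.add_apply]
        exact integral_add (hint y).integrableOn (hint z).integrableOn
      map_smul' := fun c y => by
        simp only [_root_.map_smul, Pi.smul_apply, RingHom.id_apply, smul_eq_mul]
        simpa [smul_eq_mul] using integral_smul c (f := j y) (μ := volume.restrict S) }
    C (fun y => by
      calc ‖∫ t in S, j y t‖ ≤ ∫ t in S, ‖j y t‖ := norm_integral_le_integral_norm _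
        _ ≤ ∫ t, ‖j y t‖ := setIntegral_le_integral (hint y).norm
              (Eventually.of_forall fun t => norm_nonneg _)
        _ ≤ C * ‖y‖ := hC y) with hℓ
  have hℓ_apply : ∀ y : E, ℓ y = ∫ t in S, j y t := fun y => rfl
  have hLHS : ∫ t in S, j (∫ a, g a • T a x) t = ∫ a, g a * ∫ t in S, j x (t - a) := by
    rw [← hℓ_apply, ← ℓ.integral_comp_comm hgT]
    refine integral_congr_ae (Eventually.of_forall fun a => ?_)
    have h1 : ∫ t in S, j (T a x) t = ∫ t in S, j x (t - a) :=
      integral_congr_ae (ae_restrict_of_ae (hT a x))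
    show ℓ (g a • T a x) = g a * ∫ t in S, j x (t - a)
    rw [ℓ.map_smul, hℓ_apply, smul_eq_mul, h1]
  rw [hLHS]
  -- Fubini for the right-hand side
  have hres : Integrable (fun p : (Fin d → ℝ) × (Fin d → ℝ) => g p.2 * j x (p.1 - p.2))
      ((volume.restrict S).prod volume) := by
    have heq : (volume.restrict S).prod (volume : Measure (Fin d → ℝ))
        = ((volume : Measure (Fin d → ℝ)).prod volume).restrict (S ×ˢ Set.univ) := by
      rw [← Measure.prod_restrict, Measure.restrict_univ]
    rw [heq]
    exact hprod.restrict
  have hswap := integral_integral_swap (f := fun t a => g a * j x (t - a))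
      (μ := volume.restrict S) (ν := volume) hres
  rw [hswap]
  refine integral_congr_ae (Eventually.of_forall fun a => ?_)
  simp_rw [← smul_eq_mul]
  rw [integral_smul]

end conv

section cc
variable {d : ℕ} {E : Type*} [NormedAddCommGroup E] [NormedSpace ℂ E] [CompleteSpace E]

lemma conv_comm_pt (u v : (Fin d → ℝ) → ℂ) (t : Fin d → ℝ) :
    ∫ a, u a * v (t - a) = ∫ a, v a * u (t - a) := by
  have h := integral_sub_left_eq_self (fun b => u b * v (t - b)) volume t
  rw [← h]
  refine integral_congr_ae (Eventually.of_forall fun a => ?_)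
  simp only [sub_sub_cancel]
  ring

lemma ae_comp_sub {u v : (Fin d → ℝ) → ℂ} (h : u =ᵐ[volume] v) (a : Fin d → ℝ) :
    (fun t => u (t - a)) =ᵐ[volume] fun t => v (t - a) := by
  have hq : Measure.QuasiMeasurePreserving (fun t : Fin d → ℝ => t - a) volume volume :=
    (measurePreserving_sub_right volume a).quasiMeasurePreserving
  exact hq.ae_eq_comp h

end cc

set_option maxHeartbeats 1000000 in
/-- Let `B` be a Segal algebra on `ℝ^d`: a Banach space `E` continuously
and densely embedded in `L¹(ℝ^d)` (via an a.e.-injective linear map `j`), invariant under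
translations acting isometrically and strongly continuously. Suppose `B` is strongly
character invariant: the multiplication operators `M s` with `j (M s x) = χ_s · j x` act
isometrically on `B`. Then for every `f ∈ B` the map `s ↦ χ_s · f` is continuous from
`ℝ^d` to `B`. -/
theorem strong_character_invariance_continuous
    {d : ℕ} {E : Type*}
    [NormedAddCommGroup E] [NormedSpace ℂ E] [CompleteSpace E]
    (j : E →ₗ[ℂ] ((Fin d → ℝ) → ℂ))
    (hint : ∀ x : E, Integrable (j x) volume)
    (hinj : ∀ x y : E, j x =ᵐ[volume] j y → x = y)
    (hemb : ∃ C : ℝ, 0 < C ∧ ∀ x : E, ∫ t, ‖j x t‖ ≤ C * ‖x‖)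
    (hdense : ∀ g : (Fin d → ℝ) → ℂ, Integrable g volume →
      ∀ ε : ℝ, 0 < ε → ∃ x : E, ∫ t, ‖j x t - g t‖ < ε)
    (T : (Fin d → ℝ) → E →ₗ[ℂ] E)
    (hT : ∀ (a : Fin d → ℝ) (x : E), j (T a x) =ᵐ[volume] fun t => j x (t - a))
    (hTiso : ∀ (a : Fin d → ℝ) (x : E), ‖T a x‖ = ‖x‖)
    (hTcont : ∀ x : E, Continuous fun a => T a x)
    (M : (Fin d → ℝ) → E →ₗ[ℂ] E)
    (hM : ∀ (s : Fin d → ℝ) (x : E), j (M s x) =ᵐ[volume] fun t => character s t * j x t)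
    (hMiso : ∀ (s : Fin d → ℝ) (x : E), ‖M s x‖ = ‖x‖) :
    ∀ x : E, Continuous fun s => M s x := by
  obtain ⟨C, hC0, hC⟩ := hemb
  -- commutativity of convolution inside `E`
  have hcomm : ∀ x y : E, (∫ a, j x a • T a y) = ∫ a, j y a • T a x := by
    intro x y
    refine hinj _ _ ?_
    have hmid : (fun t => ∫ a, j x a * j y (t - a)) =ᵐ[volume]
        fun t => ∫ a, j y a * j x (t - a) :=
      Eventually.of_forall fun t => conv_comm_pt (j x) (j y) t
    exact (conv_j j hint hC T hT hTiso hTcont (hint x) y).trans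
      (hmid.trans (conv_j j hint hC T hT hTiso hTcont (hint y) x).symm)
  -- the group law for `M`
  have hMadd : ∀ (s s' : Fin d → ℝ) (x : E), M s (M s' x) = M (s + s') x := by
    intro s s' x
    refine hinj _ _ ?_
    have h2 : (fun t => character s t * j (M s' x) t) =ᵐ[volume]
        fun t => character (s + s') t * j x t := by
      filter_upwards [hM s' x] with t ht
      rw [ht, ← mul_assoc, character_add]
    exact ((hM s (M s' x)).trans h2).trans (hM (s + s') x).symm
  have hT0 : ∀ x : E, T 0 x = x := fun x => hinj _ _ ((hT 0 x).trans
    (Eventually.of_forall fun t => by show j x (t - 0) = j x t; rw [sub_zero]))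
  -- commutation between translations and modulations
  have hTM : ∀ (a s : Fin d → ℝ) (x : E),
      T a (M s x) = character (-s) a • M s (T a x) := by
    intro a s x
    refine hinj _ _ ?_
    have h2 : (fun t => j (M s x) (t - a)) =ᵐ[volume]
        fun t => character s (t - a) * j x (t - a) := ae_comp_sub (hM s x) a
    have h4 : (fun t => character s t * j (T a x) t) =ᵐ[volume]
        fun t => character s t * j x (t - a) := by
      filter_upwards [hT a x] with t ht; rw [ht]
    have h5 := (hM s (T a x)).trans h4
    have h3 : j (character (-s) a • M s (T a x)) =ᵐ[volume]
        fun t => character (-s) a * (character s t * j x (t - a)) := by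
      rw [_root_.map_smul]
      filter_upwards [h5] with t ht
      show character (-s) a • j (M s (T a x)) t = _
      rw [smul_eq_mul, ht]
    have hmid : (fun t => character s (t - a) * j x (t - a)) =ᵐ[volume]
        fun t => character (-s) a * (character s t * j x (t - a)) :=
      Eventually.of_forall fun t => by
        show character s (t - a) * j x (t - a)
          = character (-s) a * (character s t * j x (t - a))
        rw [character_shift]; ring
    exact ((hT a (M s x)).trans (h2.trans hmid)).trans h3.symm
  -- it suffices to prove continuity at `0`
  suffices key : ∀ y : E, Tendsto (fun s => M s y) (𝓝 0) (𝓝 y) by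
    intro f
    rw [continuous_iff_continuousAt]
    intro s₀
    have hsub : Tendsto (fun s : Fin d → ℝ => s - s₀) (𝓝 s₀) (𝓝 0) :=
      tendsto_sub_nhds_zero_iff.mpr tendsto_id
    have h := (key (M s₀ f)).comp hsub
    have hrw : (fun s => M (s - s₀) (M s₀ f)) = fun s => M s f := by
      funext s; rw [hMadd, sub_add_cancel]
    rw [show ((fun s => M s (M s₀ f)) ∘ fun s => s - s₀) = fun s => M (s - s₀) (M s₀ f) from rfl,
      hrw] at h
    exact h
  intro y
  rw [Metric.tendsto_nhds]
  intro ε hε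
  set ε₁ := ε / 8 with hε₁def
  have hε₁ : 0 < ε₁ := by positivity
  -- a small ball on which translations move `y` by at most `ε₁`
  obtain ⟨r, hr, hball⟩ : ∃ r > 0, ∀ a : Fin d → ℝ, ‖a‖ ≤ r → ‖T a y - y‖ ≤ ε₁ := by
    have hc : ContinuousAt (fun a => T a y) 0 := (hTcont y).continuousAt
    rw [Metric.continuousAt_iff] at hc
    obtain ⟨δ₀, hδ₀, h⟩ := hc ε₁ hε₁
    refine ⟨δ₀ / 2, by positivity, fun a ha => ?_⟩
    have h2 := h (x := a) (by rw [dist_zero_right]; linarith)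
    rw [dist_eq_norm, hT0] at h2
    exact h2.le
  set A := Metric.closedBall (0 : Fin d → ℝ) r with hA
  have hAmem : ∀ a : Fin d → ℝ, a ∈ A → ‖a‖ ≤ r := by
    intro a ha
    rwa [hA, Metric.mem_closedBall, dist_zero_right] at ha
  have hAmeas : MeasurableSet A := measurableSet_closedBall
  have hvpos : 0 < volume A := Metric.measure_closedBall_pos volume 0 hr
  have hvlt : volume A < ⊤ := measure_closedBall_lt_top
  set v := (volume A).toReal with hv
  have hv0 : 0 < v := ENNReal.toReal_pos hvpos.ne' hvlt.ne
  set φ : (Fin d → ℝ) → ℂ := A.indicator (fun _ => ((v⁻¹ : ℝ) : ℂ)) with hφ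
  have hφint : Integrable φ volume := by
    rw [hφ, integrable_indicator_iff hAmeas]
    exact integrableOn_const hvlt.ne
  have hφ1 : ∫ a, φ a = 1 := by
    rw [hφ, integral_indicator_const _ hAmeas, measureReal_def, ← hv, Complex.real_smul,
      ← Complex.ofReal_mul, mul_inv_cancel₀ hv0.ne', Complex.ofReal_one]
  have hφnormfun : (fun a => ‖φ a‖) = A.indicator (fun _ => v⁻¹) := by
    funext a
    by_cases h : a ∈ A
    · rw [hφ, Set.indicator_of_mem h, Set.indicator_of_mem h, Complex.norm_real,
        Real.norm_eq_abs, abs_of_nonneg (inv_nonneg.mpr hv0.le)]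
    · simp [hφ, Set.indicator_of_notMem h]
  have hφnorm : ∫ a, ‖φ a‖ = 1 := by
    rw [hφnormfun, integral_indicator_const _ hAmeas, measureReal_def, ← hv, smul_eq_mul,
      mul_inv_cancel₀ hv0.ne']
  -- approximate `φ` from within `E`
  set ε₂ := ε₁ / (2 * ‖y‖ + 1) with hε₂def
  have hε₂ : 0 < ε₂ := by positivity
  obtain ⟨ψ, hψ⟩ := hdense φ hφint ε₂ hε₂
  have hψφ : ∫ t, ‖φ t - j ψ t‖ < ε₂ := by
    refine lt_of_le_of_lt (le_of_eq ?_) hψ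
    exact integral_congr_ae (Eventually.of_forall fun t =>
      show ‖φ t - j ψ t‖ = ‖j ψ t - φ t‖ from norm_sub_rev _ _)
  have hjy := hint y
  -- the `L¹` distance from `χ_s ⬝ j y` to `j y` tends to `0`
  have hGmeas : ∀ s : Fin d → ℝ,
      AEStronglyMeasurable (fun t => ‖(character s t - 1) * j y t‖) volume :=
    fun s => (((character_cont_t s).sub continuous_const).aestronglyMeasurable.mul
      hjy.aestronglyMeasurable).norm
  have hGlim : Tendsto (fun s : Fin d → ℝ => ∫ t, ‖(character s t - 1) * j y t‖)
      (𝓝 0) (𝓝 0) := by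
    have hbd : ∀ (s t : Fin d → ℝ), ‖‖(character s t - 1) * j y t‖‖ ≤ 2 * ‖j y t‖ := by
      intro s t
      rw [norm_norm, norm_mul]
      have h1 : ‖character s t - 1‖ ≤ 2 := by
        calc ‖character s t - 1‖ ≤ ‖character s t‖ + ‖(1 : ℂ)‖ := norm_sub_le _ _
          _ = 2 := by rw [character_norm]; norm_num
      exact mul_le_mul_of_nonneg_right h1 (norm_nonneg _)
    have hlim : ∀ t : Fin d → ℝ,
        Tendsto (fun s : Fin d → ℝ => ‖(character s t - 1) * j y t‖) (𝓝 0) (𝓝 0) := by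
      intro t
      have hc : Continuous fun s : Fin d → ℝ => ‖(character s t - 1) * j y t‖ :=
        (((character_cont_s t).sub continuous_const).mul continuous_const).norm
      have h := hc.tendsto 0
      simpa [character_zero] using h
    have h := tendsto_integral_filter_of_dominated_convergence (μ := volume)
      (bound := fun t => 2 * ‖j y t‖)
      (Eventually.of_forall hGmeas)
      (Eventually.of_forall fun s => Eventually.of_forall fun t => hbd s t)
      (hjy.norm.const_mul 2)
      (Eventually.of_forall fun t => hlim t)
    simpa using h
  -- smallness of `s` makes the characters close to `1` on `A`
  set K := 2 * π * (d : ℝ) * r + 1 with hK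
  have hK0 : 0 < K := by positivity
  set δ := min (1 / (2 * K)) (ε₁ / (2 * K * (‖y‖ + 1))) with hδdef
  have hδ0 : 0 < δ := lt_min (by positivity) (by positivity)
  have hcharA : ∀ s : Fin d → ℝ, ‖s‖ < δ → ∀ a ∈ A,
      ‖character (-s) a - 1‖ ≤ ε₁ / (‖y‖ + 1) := by
    intro s hs a ha
    have haA : ‖a‖ ≤ r := hAmem a ha
    set w := ∑ i, (-s) i * a i with hw
    have hwbd : |w| ≤ (d : ℝ) * (‖s‖ * r) := by
      calc |w| ≤ ∑ i, |(-s) i * a i| := Finset.abs_sum_le_sum_abs _ _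
        _ ≤ ∑ _i : Fin d, ‖s‖ * r := by
            refine Finset.sum_le_sum fun i _ => ?_
            rw [abs_mul, Pi.neg_apply, abs_neg]
            have h1 : |s i| ≤ ‖s‖ := by simpa using norm_le_pi_norm s i
            have h2 : |a i| ≤ r := le_trans (by simpa using norm_le_pi_norm a i) haA
            exact mul_le_mul h1 h2 (abs_nonneg _) (norm_nonneg _)
        _ = (d : ℝ) * (‖s‖ * r) := by
            rw [Finset.sum_const, Finset.card_univ, Fintype.card_fin, nsmul_eq_mul]
    have hzn : ‖(2 * (π : ℂ) * Complex.I * (w : ℂ))‖ = 2 * π * |w| := by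
      have he : (2 * (π : ℂ) * Complex.I * (w : ℂ)) = (((2 * π * w : ℝ)) : ℂ) * Complex.I := by
        push_cast; ring
      rw [he, norm_mul, Complex.norm_I, mul_one, Complex.norm_real, Real.norm_eq_abs,
        abs_mul, abs_of_pos (by positivity : (0 : ℝ) < 2 * π)]
    have hzle : 2 * π * |w| ≤ K * ‖s‖ := by
      have h1 : 2 * π * |w| ≤ 2 * π * ((d : ℝ) * (‖s‖ * r)) :=
        mul_le_mul_of_nonneg_left hwbd (by positivity)
      have h2 : 2 * π * ((d : ℝ) * (‖s‖ * r)) ≤ K * ‖s‖ := by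
        rw [hK]; nlinarith [norm_nonneg s, pi_pos]
      linarith
    have hsmall : K * ‖s‖ ≤ 1 / 2 := by
      have h1 : ‖s‖ ≤ 1 / (2 * K) := le_of_lt (lt_of_lt_of_le hs (min_le_left _ _))
      calc K * ‖s‖ ≤ K * (1 / (2 * K)) := mul_le_mul_of_nonneg_left h1 hK0.le
        _ = 1 / 2 := by field_simp
    have hz1 : ‖(2 * (π : ℂ) * Complex.I * (w : ℂ))‖ ≤ 1 := by
      rw [hzn]
      exact le_trans hzle (le_trans hsmall (by norm_num))
    have hexp : ‖character (-s) a - 1‖ ≤ 2 * (2 * π * |w|) := by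
      have h := Complex.norm_exp_sub_one_le hz1
      rw [hzn] at h
      exact h
    have h2 : ‖s‖ ≤ ε₁ / (2 * K * (‖y‖ + 1)) := le_of_lt (lt_of_lt_of_le hs (min_le_right _ _))
    calc ‖character (-s) a - 1‖ ≤ 2 * (2 * π * |w|) := hexp
      _ ≤ 2 * (K * ‖s‖) := by linarith
      _ ≤ 2 * (K * (ε₁ / (2 * K * (‖y‖ + 1)))) := by nlinarith [hK0, norm_nonneg s]
      _ = ε₁ / (‖y‖ + 1) := by
          have hKne : K ≠ 0 := ne_of_gt hK0
          have hyne : (0:ℝ) < ‖y‖ + 1 := by positivity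
          field_simp
  -- the eventual estimate
  have hδev : ∀ᶠ s : Fin d → ℝ in 𝓝 0, ‖s‖ < δ := by
    filter_upwards [Metric.ball_mem_nhds (0 : Fin d → ℝ) hδ0] with s hs
    rwa [Metric.mem_ball, dist_zero_right] at hs
  have hGev : ∀ᶠ s : Fin d → ℝ in 𝓝 0,
      (∫ t, ‖(character s t - 1) * j y t‖) < ε₁ / (‖ψ‖ + 1) :=
    hGlim.eventually (eventually_lt_nhds (by positivity))
  filter_upwards [hδev, hGev] with s hsδ hsG
  rw [dist_eq_norm]
  have hI1 : Integrable (fun a => φ a • T a (M s y)) volume :=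
    conv_integrand_integrable T hTiso hTcont hφint _
  have hI2 : Integrable (fun a => j ψ a • T a (M s y)) volume :=
    conv_integrand_integrable T hTiso hTcont (hint ψ) _
  have hI3 : Integrable (fun a => j ψ a • T a y) volume :=
    conv_integrand_integrable T hTiso hTcont (hint ψ) _
  have hI4 : Integrable (fun a => φ a • T a y) volume :=
    conv_integrand_integrable T hTiso hTcont hφint _
  -- Bound 1
  have hB1 : ‖M s y - ∫ a, φ a • T a (M s y)‖ ≤ 2 * ε₁ := by
    have hMy : (∫ _a : Fin d → ℝ, φ _a • M s y) = M s y := by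
      rw [integral_smul_const, hφ1, one_smul]
    have hIc : Integrable (fun a => φ a • M s y) volume := hφint.smul_const _
    have hdiff : M s y - (∫ a, φ a • T a (M s y)) = ∫ a, φ a • (M s y - T a (M s y)) := by
      calc M s y - (∫ a, φ a • T a (M s y))
          = (∫ _a : Fin d → ℝ, φ _a • M s y) - ∫ a, φ a • T a (M s y) := by rw [hMy]
        _ = ∫ a, (φ a • M s y - φ a • T a (M s y)) := (integral_sub hIc hI1).symm
        _ = ∫ a, φ a • (M s y - T a (M s y)) :=
            integral_congr_ae (Eventually.of_forall fun a => (smul_sub _ _ _).symm)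
    rw [hdiff]
    refine le_trans (norm_integral_le_of_norm_le (hφint.norm.mul_const (2 * ε₁))
      (Eventually.of_forall fun a => ?_)) ?_
    · by_cases ha : a ∈ A
      · rw [norm_smul]
        refine mul_le_mul_of_nonneg_left ?_ (norm_nonneg _)
        have hcom : M s y - T a (M s y) = M s (y - character (-s) a • T a y) := by
          rw [hTM a s y, map_sub, _root_.map_smul]
        rw [hcom, hMiso]
        have h1 : ‖y - T a y‖ ≤ ε₁ := by rw [norm_sub_rev]; exact hball a (hAmem a ha)
        have h2 : ‖T a y - character (-s) a • T a y‖ ≤ ε₁ := by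
          have he : T a y - character (-s) a • T a y = (1 - character (-s) a) • T a y := by
            rw [sub_smul, one_smul]
          rw [he, norm_smul, hTiso]
          have h3 := hcharA s hsδ a ha
          rw [norm_sub_rev] at h3
          have h4 : ε₁ / (‖y‖ + 1) * ‖y‖ ≤ ε₁ := by
            rw [div_mul_eq_mul_div, div_le_iff₀ (by positivity)]
            nlinarith [norm_nonneg y]
          calc ‖1 - character (-s) a‖ * ‖y‖ ≤ ε₁ / (‖y‖ + 1) * ‖y‖ :=
                mul_le_mul_of_nonneg_right h3 (norm_nonneg _)
            _ ≤ ε₁ := h4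
        calc ‖y - character (-s) a • T a y‖
            ≤ ‖y - T a y‖ + ‖T a y - character (-s) a • T a y‖ := by
              have h := dist_triangle y (T a y) (character (-s) a • T a y)
              simpa [dist_eq_norm] using h
          _ ≤ ε₁ + ε₁ := add_le_add h1 h2
          _ = 2 * ε₁ := by ring
      · have h0 : φ a = 0 := Set.indicator_of_notMem ha _
        rw [h0]
        simp only [zero_smul, norm_zero]
        positivity
    · rw [integral_mul_const, hφnorm, one_mul]
  -- Bounds 2 and 4
  have hB24 : ∀ z : E, ‖z‖ = ‖y‖ →
      ‖(∫ a, φ a • T a z) - ∫ a, j ψ a • T a z‖ ≤ ε₁ := by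
    intro z hz
    have h1 : (∫ a, φ a • T a z) - (∫ a, j ψ a • T a z) = ∫ a, (φ a - j ψ a) • T a z := by
      rw [← integral_sub (conv_integrand_integrable T hTiso hTcont hφint z)
        (conv_integrand_integrable T hTiso hTcont (hint ψ) z)]
      exact integral_congr_ae (Eventually.of_forall fun a => (sub_smul _ _ _).symm)
    rw [h1]
    refine (conv_norm_le T hTiso (hφint.sub (hint ψ)) z).trans ?_
    rw [hz]
    have h3 : (∫ a, ‖φ a - j ψ a‖) ≤ ε₂ := hψφ.le
    have h5 : 0 ≤ ∫ a, ‖φ a - j ψ a‖ := integral_nonneg fun a => norm_nonneg _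
    calc (∫ a, ‖φ a - j ψ a‖) * ‖y‖ ≤ ε₂ * ‖y‖ :=
          mul_le_mul_of_nonneg_right h3 (norm_nonneg _)
      _ ≤ ε₁ := by
          rw [hε₂def, div_mul_eq_mul_div, div_le_iff₀ (by positivity)]
          nlinarith [norm_nonneg y, hε₁]
  -- Bound 3
  have hB3 : ‖(∫ a, j ψ a • T a (M s y)) - ∫ a, j ψ a • T a y‖ ≤ ε₁ := by
    have h1 : (∫ a, j ψ a • T a (M s y)) - (∫ a, j ψ a • T a y)
        = ∫ a, j ψ a • T a (M s y - y) := by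
      rw [← integral_sub hI2 hI3]
      refine integral_congr_ae (Eventually.of_forall fun a => ?_)
      show j ψ a • T a (M s y) - j ψ a • T a y = j ψ a • T a (M s y - y)
      rw [map_sub, smul_sub]
    have h2 : (∫ a, j ψ a • T a (M s y - y)) = ∫ a, j (M s y - y) a • T a ψ :=
      hcomm ψ (M s y - y)
    rw [h1, h2]
    refine (conv_norm_le T hTiso (hint (M s y - y)) ψ).trans ?_
    have h4 : (∫ a, ‖j (M s y - y) a‖) = ∫ t, ‖(character s t - 1) * j y t‖ := by
      refine integral_congr_ae ?_
      filter_upwards [hM s y] with t ht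
      rw [map_sub, Pi.sub_apply, ht, sub_mul, one_mul]
    rw [h4]
    calc (∫ t, ‖(character s t - 1) * j y t‖) * ‖ψ‖ ≤ ε₁ / (‖ψ‖ + 1) * ‖ψ‖ :=
          mul_le_mul_of_nonneg_right hsG.le (norm_nonneg _)
      _ ≤ ε₁ := by
          rw [div_mul_eq_mul_div, div_le_iff₀ (by positivity)]
          nlinarith [norm_nonneg ψ, hε₁]
  -- Bound 5
  have hB5 : ‖(∫ a, φ a • T a y) - y‖ ≤ ε₁ := by
    have hMy : (∫ _a : Fin d → ℝ, φ _a • y) = y := by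
      rw [integral_smul_const, hφ1, one_smul]
    have hdiff : (∫ a, φ a • T a y) - y = ∫ a, φ a • (T a y - y) := by
      calc (∫ a, φ a • T a y) - y
          = (∫ a, φ a • T a y) - ∫ _a : Fin d → ℝ, φ _a • y := by rw [hMy]
        _ = ∫ a, (φ a • T a y - φ a • y) := (integral_sub hI4 (hφint.smul_const y)).symm
        _ = ∫ a, φ a • (T a y - y) :=
            integral_congr_ae (Eventually.of_forall fun a => (smul_sub _ _ _).symm)
    rw [hdiff]
    refine le_trans (norm_integral_le_of_norm_le (hφint.norm.mul_const ε₁)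
      (Eventually.of_forall fun a => ?_)) ?_
    · by_cases ha : a ∈ A
      · rw [norm_smul]
        exact mul_le_mul_of_nonneg_left (hball a (hAmem a ha)) (norm_nonneg _)
      · have h0 : φ a = 0 := Set.indicator_of_notMem ha _
        rw [h0]
        simp only [zero_smul, norm_zero]
        positivity
    · rw [integral_mul_const, hφnorm, one_mul]
  -- assemble
  have hB2 : ‖(∫ a, φ a • T a (M s y)) - ∫ a, j ψ a • T a (M s y)‖ ≤ ε₁ :=
    hB24 (M s y) (hMiso s y)
  have hB4 : ‖(∫ a, j ψ a • T a y) - ∫ a, φ a • T a y‖ ≤ ε₁ := by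
    rw [norm_sub_rev]; exact hB24 y rfl
  have hsum : ‖M s y - y‖ ≤ ‖M s y - ∫ a, φ a • T a (M s y)‖
      + (‖(∫ a, φ a • T a (M s y)) - ∫ a, j ψ a • T a (M s y)‖
      + (‖(∫ a, j ψ a • T a (M s y)) - ∫ a, j ψ a • T a y‖
      + (‖(∫ a, j ψ a • T a y) - ∫ a, φ a • T a y‖
      + ‖(∫ a, φ a • T a y) - y‖))) := by
    have h : M s y - y = (M s y - ∫ a, φ a • T a (M s y))
        + (((∫ a, φ a • T a (M s y)) - ∫ a, j ψ a • T a (M s y))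
        + (((∫ a, j ψ a • T a (M s y)) - ∫ a, j ψ a • T a y)
        + (((∫ a, j ψ a • T a y) - ∫ a, φ a • T a y)
        + ((∫ a, φ a • T a y) - y)))) := by abel
    rw [h]
    exact (norm_add_le _ _).trans (add_le_add le_rfl ((norm_add_le _ _).trans
      (add_le_add le_rfl ((norm_add_le _ _).trans
        (add_le_add le_rfl (norm_add_le _ _))))))
  have htotal : ‖M s y - y‖ ≤ 2 * ε₁ + (ε₁ + (ε₁ + (ε₁ + ε₁))) :=
    hsum.trans (add_le_add hB1 (add_le_add hB2 (add_le_add hB3 (add_le_add hB4 hB5))))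
  have : 2 * ε₁ + (ε₁ + (ε₁ + (ε₁ + ε₁))) < ε := by rw [hε₁def]; linarith
  linarith
end
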